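/- Let V, W be finite-dimensional inner product spaces and A, B ∈ Lin(V, W) with rank(A) = rank(B) = r for all maps in a path-connected set S ⊆ Lin(V, W) of rank-r maps. Then the map A ↦ A† is continuous on the set {A ∈ Lin(V, W) : rank A = r}. -/

import Mathlib

open Module LinearMap Metric Filter Topology Polynomial

/-- Orthogonal projection onto a submodule, as an endomorphism. -/
noncomputable def orthProj {E : Type*} [NormedAddCommGroup E] [InnerProductSpace ℝ E]
    [FiniteDimensional ℝ E] (K : Submodule ℝ E) : E →L[ℝ] E :=
  K.subtypeL.comp (K.orthogonalProjectionOnto)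

/-- `X` is the Moore–Penrose pseudoinverse of `A`: `A X = Proj_{im A}`,
`X A = Proj_{im A*}`, together with the normalization `X Proj_{im A} = X`
(i.e. `X` vanishes on `(im A)ᗮ`), which pins `X` down uniquely. -/
def IsMP {V W : Type*} [NormedAddCommGroup V] [InnerProductSpace ℝ V] [FiniteDimensional ℝ V]
    [NormedAddCommGroup W] [InnerProductSpace ℝ W] [FiniteDimensional ℝ W]
    (A : V →L[ℝ] W) (X : W →L[ℝ] V) : Prop :=
  A ∘L X = orthProj (LinearMap.range (A : V →ₗ[ℝ] W)) ∧
  X ∘L A = orthProj (LinearMap.range (ContinuousLinearMap.adjoint A : W →ₗ[ℝ] V)) ∧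
  X ∘L orthProj (LinearMap.range (A : V →ₗ[ℝ] W)) = X

lemma orthProj_apply_of_mem {E : Type*} [NormedAddCommGroup E] [InnerProductSpace ℝ E]
    [FiniteDimensional ℝ E] {K : Submodule ℝ E} {v : E} (hv : v ∈ K) : orthProj K v = v := by
  have h := Submodule.orthogonalProjectionOnto_mem_subspace_eq_self (K := K) ⟨v, hv⟩
  simp only [orthProj, ContinuousLinearMap.comp_apply]
  rw [h]
  rfl

lemma orthProj_apply_of_mem_orthogonal {E : Type*} [NormedAddCommGroup E] [InnerProductSpace ℝ E]
    [FiniteDimensional ℝ E] {K : Submodule ℝ E} {v : E} (hv : v ∈ Kᗮ) : orthProj K v = 0 := by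
  simp only [orthProj, ContinuousLinearMap.comp_apply,
    Submodule.orthogonalProjectionOnto_apply_of_mem_orthogonal hv]
  rfl

lemma eval_charpoly_mat {ι : Type*} [Fintype ι] [DecidableEq ι] (M : Matrix ι ι ℝ) (t : ℝ) :
    M.charpoly.eval t = (t • (1 : Matrix ι ι ℝ) - M).det := by
  rw [Matrix.charpoly, ← Polynomial.coe_evalRingHom, RingHom.map_det]
  congr 1
  ext i j
  by_cases h : i = j
  · subst h
    rw [RingHom.mapMatrix_apply]
    simp [Matrix.charmatrix_apply_eq, Matrix.sub_apply, Matrix.smul_apply, Matrix.one_apply_eq]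
  · rw [RingHom.mapMatrix_apply, Matrix.map_apply, Matrix.charmatrix_apply_ne _ _ _ h]
    simp [Matrix.sub_apply, Matrix.smul_apply, Matrix.one_apply_ne h]

lemma charpoly_diag {ι : Type*} [Fintype ι] [DecidableEq ι] (d : ι → ℝ) :
    (Matrix.diagonal d).charpoly = ∏ i, (X - C (d i)) := by
  rw [Matrix.charpoly]
  have : Matrix.charmatrix (Matrix.diagonal d) = Matrix.diagonal (fun i => (X : ℝ[X]) - C (d i)) := by
    ext i j
    by_cases h : i = j
    · subst h; simp [Matrix.charmatrix_apply_eq]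
    · rw [Matrix.charmatrix_apply_ne _ _ _ h, Matrix.diagonal_apply_ne _ h,
        Matrix.diagonal_apply_ne _ h, map_zero, neg_zero]
  rw [this, Matrix.det_diagonal]


section Aux

variable {V W : Type*} [NormedAddCommGroup V] [InnerProductSpace ℝ V] [FiniteDimensional ℝ V]
  [NormedAddCommGroup W] [InnerProductSpace ℝ W] [FiniteDimensional ℝ W]

lemma IsMP.unique {A : V →L[ℝ] W} {X₁ X₂ : W →L[ℝ] V} (h₁ : IsMP A X₁) (h₂ : IsMP A X₂) :
    X₁ = X₂ := by
  obtain ⟨hA1, hA2, hA3⟩ := h₁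
  obtain ⟨hB1, hB2, hB3⟩ := h₂
  calc X₁ = X₁ ∘L orthProj (LinearMap.range (A : V →ₗ[ℝ] W)) := hA3.symm
    _ = X₁ ∘L (A ∘L X₂) := by rw [hB1]
    _ = (X₁ ∘L A) ∘L X₂ := by rw [ContinuousLinearMap.comp_assoc]
    _ = (X₂ ∘L A) ∘L X₂ := by rw [hA2, hB2]
    _ = X₂ ∘L (A ∘L X₂) := by rw [ContinuousLinearMap.comp_assoc]
    _ = X₂ ∘L orthProj (LinearMap.range (A : V →ₗ[ℝ] W)) := by rw [hB1]
    _ = X₂ := hB3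

noncomputable def cst (j : ℕ) (A : V →L[ℝ] W) : ℝ :=
  (LinearMap.charpoly ((A ∘L ContinuousLinearMap.adjoint A : W →L[ℝ] W) : W →ₗ[ℝ] W)).coeff j

noncomputable def FF (r : ℕ) (A : V →L[ℝ] W) : W →L[ℝ] V :=
  (-(cst (finrank ℝ W - r) A)⁻¹) •
    ((ContinuousLinearMap.adjoint A) ∘L
      ∑ k ∈ Finset.range r,
        cst (finrank ℝ W - r + 1 + k) A •
          (A ∘L ContinuousLinearMap.adjoint A) ^ k)

lemma continuous_SA : Continuous fun A : V →L[ℝ] W => A ∘L ContinuousLinearMap.adjoint A := by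
  exact Continuous.clm_comp continuous_id
    (ContinuousLinearMap.adjoint : (V →L[ℝ] W) ≃ₗᵢ⋆[ℝ] (W →L[ℝ] V)).continuous

lemma continuous_cst (j : ℕ) : Continuous fun A : V →L[ℝ] W => cst j A := by
  classical
  set m := finrank ℝ W with hm
  let bW : Basis (Fin m) ℝ W := Module.finBasis ℝ W
  let L : (W →L[ℝ] W) →ₗ[ℝ] Matrix (Fin m) (Fin m) ℝ :=
    (LinearMap.toMatrix bW bW).toLinearMap ∘ₗ (ContinuousLinearMap.coeLM ℝ)
  have hL : Continuous L := L.continuous_of_finiteDimensional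
  have hrepr : ∀ A : V →L[ℝ] W, cst j A = ∑ i ∈ Finset.range (m + 1),
      ((i : ℝ) • (1 : Matrix (Fin m) (Fin m) ℝ) - L (A ∘L ContinuousLinearMap.adjoint A)).det *
        (Lagrange.basis (Finset.range (m + 1)) (fun t : ℕ => (t : ℝ)) i).coeff j := by
    intro A
    set M : Matrix (Fin m) (Fin m) ℝ := L (A ∘L ContinuousLinearMap.adjoint A) with hM
    have hMc : cst j A = M.charpoly.coeff j := by
      rw [cst, ← LinearMap.charpoly_toMatrix _ bW]
      rfl
    have hinj : Set.InjOn (fun t : ℕ => (t : ℝ)) (Finset.range (m + 1)) :=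
      fun a _ b _ hab => Nat.cast_injective hab
    have hdeg : M.charpoly.degree < (Finset.range (m + 1)).card := by
      rw [Matrix.charpoly_degree_eq_dim, Finset.card_range, Fintype.card_fin]
      exact_mod_cast Nat.lt_succ_self m
    have := Lagrange.eq_interpolate hinj hdeg
    rw [hMc]
    conv_lhs => rw [this]
    rw [Lagrange.interpolate_apply, Polynomial.finset_sum_coeff]
    refine Finset.sum_congr rfl fun i _ => ?_
    rw [Polynomial.coeff_C_mul, eval_charpoly_mat]
  rw [funext hrepr]
  refine continuous_finset_sum _ fun i _ => ?_
  exact ((continuous_const.sub (hL.comp continuous_SA)).matrix_det).mul continuous_const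

section Spectral

variable (r : ℕ) (A : V →L[ℝ] W) (hA : finrank ℝ (LinearMap.range (A : V →ₗ[ℝ] W)) = r)

-- generic dimension-count helper
lemma card_le_finrank {ι : Type*} [Fintype ι] {v : ι → W} (hv : LinearIndependent ℝ v)
    {K : Submodule ℝ W} (hmem : ∀ i, v i ∈ K) : Fintype.card ι ≤ finrank ℝ K := by
  have hspan : Submodule.span ℝ (Set.range v) ≤ K := by
    rw [Submodule.span_le]; rintro x ⟨i, rfl⟩; exact hmem i
  calc Fintype.card ι = finrank ℝ (Submodule.span ℝ (Set.range v)) :=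
        (finrank_span_eq_card hv).symm
    _ ≤ finrank ℝ K := Submodule.finrank_mono hspan

include hA in
set_option maxHeartbeats 2000000 in
lemma key : cst (finrank ℝ W - r) A ≠ 0 ∧ IsMP A (FF r A) := by
  classical
  set m := finrank ℝ W with hm
  set A' : W →L[ℝ] V := ContinuousLinearMap.adjoint A with hA'
  set S : W →L[ℝ] W := A ∘L A' with hS
  have hSapp : ∀ w, S w = A (A' w) := fun _ => rfl
  have hsymm : LinearMap.IsSymmetric ((S : W →ₗ[ℝ] W)) := by
    intro x y
    simp only [ContinuousLinearMap.coe_coe, hSapp]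
    rw [← ContinuousLinearMap.adjoint_inner_right A (A' x) y,
      ContinuousLinearMap.adjoint_inner_left A (A' y) x]
  have hn : finrank ℝ W = m := hm.symm
  set b : OrthonormalBasis (Fin m) ℝ W := hsymm.eigenvectorBasis hn with hb
  set μ : Fin m → ℝ := hsymm.eigenvalues hn with hμ
  have hSb : ∀ i, S (b i) = μ i • b i := by
    intro i
    exact hsymm.apply_eigenvectorBasis hn i
  -- A' kills eigenvectors with zero eigenvalue
  have hker : ∀ i, μ i = 0 → A' (b i) = 0 := by
    intro i h0
    have : (inner ℝ (A' (b i)) (A' (b i)) : ℝ) = 0 := by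
      rw [ContinuousLinearMap.adjoint_inner_left A (A' (b i)) (b i), ← hSapp, hSb i, h0,
        zero_smul, inner_zero_right]
    exact inner_self_eq_zero.mp this
  have horth : ∀ i, μ i = 0 → b i ∈ (LinearMap.range (A : V →ₗ[ℝ] W))ᗮ := by
    intro i h0
    rw [Submodule.mem_orthogonal]
    rintro x ⟨v, rfl⟩
    rw [ContinuousLinearMap.coe_coe, ← ContinuousLinearMap.adjoint_inner_right A v (b i), ← hA', hker i h0, inner_zero_right]
  have hmemrange : ∀ i, μ i ≠ 0 → b i ∈ LinearMap.range (A : V →ₗ[ℝ] W) := by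
    intro i h0
    refine ⟨A' ((μ i)⁻¹ • (b i)), ?_⟩
    have : S ((μ i)⁻¹ • (b i)) = b i := by
      rw [map_smul, hSb i, smul_smul, inv_mul_cancel₀ h0, one_smul]
    simpa [hSapp] using this
  -- the characteristic polynomial
  have hmat : LinearMap.toMatrix b.toBasis b.toBasis (S : W →ₗ[ℝ] W) = Matrix.diagonal μ := by
    ext i j
    rw [LinearMap.toMatrix_apply]
    have hSbj : (S : W →ₗ[ℝ] W) (b.toBasis j) = μ j • b.toBasis j := by
      simp only [OrthonormalBasis.coe_toBasis, ContinuousLinearMap.coe_coe]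
      exact hSb j
    rw [hSbj, map_smul, Basis.repr_self, Finsupp.smul_single, Finsupp.single_apply]
    by_cases h : j = i
    · subst h; simp [Matrix.diagonal_apply_eq]
    · rw [Matrix.diagonal_apply_ne _ (Ne.symm h), if_neg h]
  have hchar : (S : W →ₗ[ℝ] W).charpoly = ∏ i, (X - C (μ i)) := by
    rw [← LinearMap.charpoly_toMatrix (S : W →ₗ[ℝ] W) b.toBasis, hmat, charpoly_diag]
  -- counting zero eigenvalues
  set Z : Finset (Fin m) := Finset.univ.filter (fun i => μ i = 0) with hZ
  set z : ℕ := Z.card with hz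
  have hrm : r ≤ m := hA ▸ Submodule.finrank_le (LinearMap.range (A : V →ₗ[ℝ] W))
  have hzm : z ≤ m := le_trans (Finset.card_le_card (Finset.subset_univ Z)) (by simp)
  have hcard1 : z ≤ m - r := by
    have h1 : Fintype.card {i // i ∈ Z} ≤ finrank ℝ ((LinearMap.range (A : V →ₗ[ℝ] W))ᗮ) := by
      refine card_le_finrank (b.orthonormal.linearIndependent.comp _ Subtype.val_injective) ?_
      rintro ⟨i, hi⟩
      exact horth i (Finset.mem_filter.mp hi).2
    have h2 : finrank ℝ (LinearMap.range (A : V →ₗ[ℝ] W)) + finrank ℝ ((LinearMap.range (A : V →ₗ[ℝ] W))ᗮ) = m :=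
      Submodule.finrank_add_finrank_orthogonal _
    rw [Fintype.card_coe] at h1
    omega
  have hcard2 : m - z ≤ r := by
    have h1 : Fintype.card {i // i ∈ Zᶜ} ≤ finrank ℝ (LinearMap.range (A : V →ₗ[ℝ] W)) := by
      refine card_le_finrank (b.orthonormal.linearIndependent.comp _ Subtype.val_injective) ?_
      rintro ⟨i, hi⟩
      refine hmemrange i ?_
      simpa [hZ] using (Finset.mem_compl.mp hi)
    rw [Fintype.card_coe, Finset.card_compl, Fintype.card_fin, hA] at h1
    omega
  have hzmr : z = m - r := by omega
  -- factorization
  set q : ℝ[X] := ∏ i ∈ Zᶜ, (X - C (μ i)) with hq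
  have hfac : (S : W →ₗ[ℝ] W).charpoly = X ^ z * q := by
    rw [hchar, ← Finset.prod_mul_prod_compl Z (fun i => (X : ℝ[X]) - C (μ i))]
    congr 1
    rw [show (∏ i ∈ Z, ((X : ℝ[X]) - C (μ i))) = ∏ _i ∈ Z, (X : ℝ[X]) from
      Finset.prod_congr rfl fun i hi => by rw [(Finset.mem_filter.mp hi).2, map_zero, sub_zero]]
    rw [Finset.prod_const, hz]
  have hcst : ∀ j, cst j A = ((S : W →ₗ[ℝ] W).charpoly).coeff j := fun j => by
    rw [cst, hS, hA']
  have hco : ∀ k, cst (z + k) A = q.coeff k := fun k => by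
    rw [hcst, hfac, Nat.add_comm z k, Polynomial.coeff_X_pow_mul]
  have hq0 : q.coeff 0 ≠ 0 := by
    rw [Polynomial.coeff_zero_eq_eval_zero, hq, Polynomial.eval_prod]
    rw [Finset.prod_ne_zero_iff]
    intro i hi
    have : μ i ≠ 0 := by simpa [hZ] using (Finset.mem_compl.mp hi)
    simp only [Polynomial.eval_sub, Polynomial.eval_X, Polynomial.eval_C, zero_sub]
    exact neg_ne_zero.mpr this
  have hdegq : q.natDegree = r := by
    rw [hq, Polynomial.natDegree_prod]
    · simp only [Polynomial.natDegree_X_sub_C]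
      rw [Finset.sum_const, smul_eq_mul, mul_one, Finset.card_compl, Fintype.card_fin]
      omega
    · intro i _; exact Polynomial.X_sub_C_ne_zero (μ i)
  -- roots of q
  have hroot : ∀ ν : ℝ, ν ≠ 0 → Module.End.HasEigenvalue ((S : W →ₗ[ℝ] W)) ν →
      q.eval ν = 0 := by
    intro ν hν hev
    have h1 : ((minpoly ℝ ((S : W →ₗ[ℝ] W)))).IsRoot ν :=
      Module.End.hasEigenvalue_iff_isRoot.mp hev
    obtain ⟨c, hc⟩ := LinearMap.minpoly_dvd_charpoly ((S : W →ₗ[ℝ] W))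
    have h2 : ((S : W →ₗ[ℝ] W).charpoly).eval ν = 0 := by
      rw [hc, Polynomial.eval_mul, h1, zero_mul]
    rw [hfac, Polynomial.eval_mul, Polynomial.eval_pow, Polynomial.eval_X] at h2
    rcases mul_eq_zero.mp h2 with h | h
    · exact absurd (pow_eq_zero_iff'.mp h).1 hν
    · exact h
  -- scalar identity
  have hscal : ∀ ν : ℝ, ν ≠ 0 → q.eval ν = 0 →
      -(q.coeff 0)⁻¹ * ((∑ k ∈ Finset.range r, q.coeff (1 + k) * ν ^ k) * ν) = 1 := by
    intro ν hν hqν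
    have hdeg' : q.natDegree < r + 1 := by omega
    have he := Polynomial.eval_eq_sum_range' hdeg' ν
    rw [Finset.sum_range_succ'] at he
    rw [hqν] at he
    have hsum : (∑ k ∈ Finset.range r, q.coeff (1 + k) * ν ^ k) * ν = -q.coeff 0 := by
      rw [Finset.sum_mul]
      have : ∀ k, q.coeff (1 + k) * ν ^ k * ν = q.coeff (k + 1) * ν ^ (k + 1) := by
        intro k; rw [Nat.add_comm 1 k, pow_succ]; ring
      rw [Finset.sum_congr rfl fun k _ => this k]
      rw [pow_zero, mul_one] at he
      linarith
    rw [hsum]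
    field_simp
  have hev : ∀ i, Module.End.HasEigenvalue ((S : W →ₗ[ℝ] W)) (μ i) :=
    fun i => hsymm.hasEigenvalue_eigenvalues hn i
  set G : W →L[ℝ] W := ∑ k ∈ Finset.range r, q.coeff (1 + k) • S ^ k with hG
  have hcz : cst z A = q.coeff 0 := by simpa using hco 0
  have hFF : FF r A = (-(q.coeff 0)⁻¹) • (A' ∘L G) := by
    unfold FF
    rw [← hm, ← hzmr, ← hA', ← hS, hG]
    congr 1
    · rw [hcz]
    · congr 1
      refine Finset.sum_congr rfl fun k _ => ?_
      rw [Nat.add_assoc, hco]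
  have hpow : ∀ (k : ℕ) (i : Fin m), (S ^ k) (b i) = (μ i ^ k) • b i := by
    intro k i
    induction k with
    | zero => simp
    | succ k ih =>
      rw [pow_succ, ContinuousLinearMap.mul_apply, hSb i, map_smul, ih, smul_smul, ← pow_succ']
  have hGb : ∀ i, G (b i) = (∑ k ∈ Finset.range r, q.coeff (1 + k) * μ i ^ k) • b i := by
    intro i
    rw [hG, ContinuousLinearMap.sum_apply, Finset.sum_smul]
    refine Finset.sum_congr rfl fun k _ => ?_
    rw [ContinuousLinearMap.smul_apply, hpow, smul_smul]
  have hc1 : A ∘L FF r A = orthProj (LinearMap.range (A : V →ₗ[ℝ] W)) := by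
    rw [hFF]
    refine ContinuousLinearMap.coe_injective (b.toBasis.ext fun i => ?_)
    simp only [ContinuousLinearMap.coe_coe, OrthonormalBasis.coe_toBasis,
      ContinuousLinearMap.comp_apply, ContinuousLinearMap.smul_apply, map_smul]
    rw [hGb i, map_smul, map_smul]
    have hSA : A (A' (b i)) = S (b i) := (hSapp (b i)).symm
    rw [hSA, hSb i]
    by_cases h : μ i = 0
    · rw [orthProj_apply_of_mem_orthogonal (horth i h), h, zero_smul, smul_zero, smul_zero]
    · rw [orthProj_apply_of_mem (hmemrange i h), smul_smul, smul_smul, mul_assoc,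
        hscal (μ i) h (hroot (μ i) h (hev i)), one_smul]
  -- the operator T = A' ∘ A and its eigenbasis
  set T : V →L[ℝ] V := A' ∘L A with hT
  have hTapp : ∀ v, T v = A' (A v) := fun _ => rfl
  have hsymmT : LinearMap.IsSymmetric ((T : V →ₗ[ℝ] V)) := by
    intro x y
    simp only [ContinuousLinearMap.coe_coe, hTapp]
    rw [ContinuousLinearMap.adjoint_inner_left A y (A x),
      ← ContinuousLinearMap.adjoint_inner_right A x (A y)]
  set d : OrthonormalBasis (Fin (finrank ℝ V)) ℝ V := hsymmT.eigenvectorBasis rfl with hd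
  set ν : Fin (finrank ℝ V) → ℝ := hsymmT.eigenvalues rfl with hν
  have hTd : ∀ j, T (d j) = ν j • d j := fun j => hsymmT.apply_eigenvectorBasis rfl j
  have hpowT : ∀ (k : ℕ) (j : Fin (finrank ℝ V)), (T ^ k) (d j) = (ν j ^ k) • d j := by
    intro k j
    induction k with
    | zero => simp
    | succ k ih =>
      rw [pow_succ, ContinuousLinearMap.mul_apply, hTd j, map_smul, ih, smul_smul, ← pow_succ']
  have hcomm : ∀ (k : ℕ) (v : V), (S ^ k) (A v) = A ((T ^ k) v) := by
    intro k
    induction k with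
    | zero => intro v; simp
    | succ k ih =>
      intro v
      rw [pow_succ', pow_succ', ContinuousLinearMap.mul_apply, ContinuousLinearMap.mul_apply,
        ih v]
      rfl
  have hAd0 : ∀ j, ν j = 0 → A (d j) = 0 := by
    intro j h0
    have h1 : (inner ℝ (A (d j)) (A (d j)) : ℝ) = 0 := by
      rw [← ContinuousLinearMap.adjoint_inner_right A (d j) (A (d j)), ← hA', ← hTapp, hTd j, h0,
        zero_smul, inner_zero_right]
    exact inner_self_eq_zero.mp h1
  have horthT : ∀ j, ν j = 0 → d j ∈ (LinearMap.range (A' : W →ₗ[ℝ] V))ᗮ := by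
    intro j h0
    rw [Submodule.mem_orthogonal]
    rintro x ⟨w, rfl⟩
    rw [ContinuousLinearMap.coe_coe, hA', ContinuousLinearMap.adjoint_inner_left A (d j) w, hAd0 j h0, inner_zero_right]
  have hmemT : ∀ j, ν j ≠ 0 → d j ∈ LinearMap.range (A' : W →ₗ[ℝ] V) := by
    intro j h0
    refine ⟨A ((ν j)⁻¹ • d j), ?_⟩
    have h1 : T ((ν j)⁻¹ • d j) = d j := by
      rw [map_smul, hTd j, smul_smul, inv_mul_cancel₀ h0, one_smul]
    exact h1
  have hevT : ∀ j, ν j ≠ 0 → q.eval (ν j) = 0 := by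
    intro j h0
    refine hroot (ν j) h0 ?_
    refine Module.End.hasEigenvalue_of_hasEigenvector (x := A (d j)) ⟨?_, ?_⟩
    · rw [Module.End.mem_eigenspace_iff]
      show S (A (d j)) = ν j • A (d j)
      have h1 : S (A (d j)) = A (T (d j)) := rfl
      rw [h1, hTd j, map_smul]
    · intro hzero
      have h2 : T (d j) = 0 := by rw [hTapp, hzero, map_zero]
      rw [hTd j] at h2
      rcases smul_eq_zero.mp h2 with h | h
      · exact h0 h
      · exact absurd h (d.orthonormal.ne_zero j)
  have hc2 : FF r A ∘L A = orthProj (LinearMap.range (A' : W →ₗ[ℝ] V)) := by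
    rw [hFF]
    refine ContinuousLinearMap.coe_injective (d.toBasis.ext fun j => ?_)
    simp only [ContinuousLinearMap.coe_coe, OrthonormalBasis.coe_toBasis,
      ContinuousLinearMap.comp_apply, ContinuousLinearMap.smul_apply]
    have hGA : A' (G (A (d j))) =
        ((∑ k ∈ Finset.range r, q.coeff (1 + k) * ν j ^ k) * ν j) • d j := by
      have hterm : ∀ k ∈ Finset.range r,
          A' ((q.coeff (1 + k) • S ^ k) (A (d j))) = (q.coeff (1 + k) * (ν j ^ k * ν j)) • d j := by
        intro k _
        rw [ContinuousLinearMap.smul_apply, map_smul, hcomm k (d j), ← hTapp, hpowT k j, map_smul,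
          hTd j, smul_smul, smul_smul, mul_assoc]
      rw [hG, ContinuousLinearMap.sum_apply, map_sum, Finset.sum_congr rfl hterm,
        ← Finset.sum_smul, Finset.sum_mul]
      congr 1
      exact Finset.sum_congr rfl fun k _ => by ring
    by_cases h : ν j = 0
    · rw [orthProj_apply_of_mem_orthogonal (horthT j h), hGA, h, mul_zero, zero_smul, smul_zero]
    · rw [orthProj_apply_of_mem (hmemT j h), hGA, smul_smul,
        hscal (ν j) h (hevT j h), one_smul]
  have hmemFF : ∀ w, FF r A w ∈ LinearMap.range (A' : W →ₗ[ℝ] V) := by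
    intro w
    rw [hFF]
    simp only [ContinuousLinearMap.smul_apply, ContinuousLinearMap.comp_apply]
    exact Submodule.smul_mem _ _ ⟨G w, rfl⟩
  have hc3 : FF r A ∘L orthProj (LinearMap.range (A : V →ₗ[ℝ] W)) = FF r A := by
    rw [← hc1]
    ext w
    simp only [ContinuousLinearMap.comp_apply]
    have h2 : FF r A (A (FF r A w)) = orthProj (LinearMap.range (A' : W →ₗ[ℝ] V)) (FF r A w) := by
      calc FF r A (A (FF r A w)) = (FF r A ∘L A) (FF r A w) := rfl
        _ = orthProj (LinearMap.range (A' : W →ₗ[ℝ] V)) (FF r A w) := by rw [hc2]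
    rw [h2, orthProj_apply_of_mem (hmemFF w)]
  refine ⟨by rw [← hzmr, hcz]; exact hq0, hc1, ?_, hc3⟩
  rw [← hA']
  exact hc2

end Spectral
end Aux



/-- The Moore–Penrose pseudoinverse is continuous on the set of maps of fixed rank `r`. -/
theorem pseudoinverse_continuousOn_fixed_rank
    {V W : Type*} [NormedAddCommGroup V] [InnerProductSpace ℝ V] [FiniteDimensional ℝ V]
    [NormedAddCommGroup W] [InnerProductSpace ℝ W] [FiniteDimensional ℝ W]
    (r : ℕ) (dag : (V →L[ℝ] W) → (W →L[ℝ] V))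
    (hdag : ∀ A : V →L[ℝ] W, finrank ℝ (LinearMap.range (A : V →ₗ[ℝ] W)) = r → IsMP A (dag A)) :
    ContinuousOn dag {A : V →L[ℝ] W | finrank ℝ (LinearMap.range (A : V →ₗ[ℝ] W)) = r} := by
  have hFFcont : ContinuousOn (FF (V := V) (W := W) r)
      {A : V →L[ℝ] W | finrank ℝ (LinearMap.range (A : V →ₗ[ℝ] W)) = r} := by
    have hadj : Continuous fun A : V →L[ℝ] W => ContinuousLinearMap.adjoint A :=
      (ContinuousLinearMap.adjoint : (V →L[ℝ] W) ≃ₗᵢ⋆[ℝ] (W →L[ℝ] V)).continuous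
    have hpow : ∀ k : ℕ,
        Continuous fun A : V →L[ℝ] W => (A ∘L ContinuousLinearMap.adjoint A) ^ k := by
      intro k
      induction k with
      | zero => simpa using continuous_const
      | succ k ih =>
        have h := Continuous.clm_comp ih continuous_SA
        simpa [pow_succ, ContinuousLinearMap.mul_def] using h
    have hsum : Continuous fun A : V →L[ℝ] W =>
        ∑ k ∈ Finset.range r,
          cst (finrank ℝ W - r + 1 + k) A • (A ∘L ContinuousLinearMap.adjoint A) ^ k :=
      continuous_finset_sum _ fun k _ => (continuous_cst _).smul (hpow k)
    have hinv : ContinuousOn (fun A : V →L[ℝ] W => -(cst (finrank ℝ W - r) A)⁻¹)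
        {A : V →L[ℝ] W | finrank ℝ (LinearMap.range (A : V →ₗ[ℝ] W)) = r} :=
      (((continuous_cst _).continuousOn).inv₀ fun A hA => (key r A hA).1).neg
    have := hinv.smul (Continuous.clm_comp hadj hsum).continuousOn
    exact this
  refine hFFcont.congr fun A hA => ?_
  exact IsMP.unique (hdag A hA) (key r A hA).2
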